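/- Let F be a strategyproof 2-facility mechanism on the line with approximation ratio at most ρ. If x is an (i|j,k)-well-separated instance with F_2(x) = x_k, then for every (i|j,k)-well-separated instance x' = (x_i, x'_j, x'_k) with x'_k ≤ x_k, it holds that F_2(x') = x'_k. -/

import Mathlib

noncomputable section

/-- Cost of an agent at location `a` under a pair of facilities. -/
def fcost (a : ℝ) (y : ℝ × ℝ) : ℝ := min |a - y.1| |a - y.2|

/-- Social cost: sum of the agents' distances to their nearest facility. -/
def scost {n : ℕ} (x : Fin n → ℝ) (y : ℝ × ℝ) : ℝ := ∑ i, fcost (x i) y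

/-- Optimal social cost over all placements of two facilities. -/
def optCost {n : ℕ} (x : Fin n → ℝ) : ℝ := ⨅ y : ℝ × ℝ, scost x y

/-- The mechanism outputs its facilities in increasing order. -/
def Ordered {n : ℕ} (F : (Fin n → ℝ) → ℝ × ℝ) : Prop := ∀ x, (F x).1 ≤ (F x).2

/-- No agent can strictly decrease her cost by misreporting her location. -/
def Strategyproof {n : ℕ} (F : (Fin n → ℝ) → ℝ × ℝ) : Prop :=
  ∀ (x : Fin n → ℝ) (i : Fin n) (y : ℝ),
    fcost (x i) (F x) ≤ fcost (x i) (F (Function.update x i y))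

/-- `F` has approximation ratio (at most) `ρ` for the social cost. -/
def ApproxRatio {n : ℕ} (F : (Fin n → ℝ) → ℝ × ℝ) (ρ : ℝ) : Prop :=
  ∀ x, scost x (F x) ≤ ρ * optCost x

/-- An `(i|j,k)`-well-separated 3-agent instance. -/
def WellSep (ρ : ℝ) (x : Fin 3 → ℝ) (i j k : Fin 3) : Prop :=
  x i < x j ∧ x j < x k ∧ ρ * (x k - x j) < x j - x i

lemma lc_fcost_nonneg (a : ℝ) (y : ℝ × ℝ) : 0 ≤ fcost a y :=
  le_min (abs_nonneg _) (abs_nonneg _)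

lemma lc_scost_nonneg {n : ℕ} (x : Fin n → ℝ) (y : ℝ × ℝ) : 0 ≤ scost x y :=
  Finset.sum_nonneg fun _ _ => lc_fcost_nonneg _ _

lemma lc_optCost_le {n : ℕ} (x : Fin n → ℝ) (y : ℝ × ℝ) : optCost x ≤ scost x y :=
  ciInf_le ⟨0, by rintro w ⟨y', rfl⟩; exact lc_scost_nonneg x y'⟩ y

lemma lc_optCost_nonneg {n : ℕ} (x : Fin n → ℝ) : 0 ≤ optCost x :=
  le_ciInf fun y => lc_scost_nonneg _ _

lemma lc_scost_three (z : Fin 3 → ℝ) (y : ℝ × ℝ) {i j k : Fin 3}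
    (hij : i ≠ j) (hik : i ≠ k) (hjk : j ≠ k) :
    scost z y = fcost (z i) y + fcost (z j) y + fcost (z k) y := by
  fin_cases i <;> fin_cases j <;> fin_cases k <;> simp_all [scost, Fin.sum_univ_three] <;> ring

def ins (x : Fin 3 → ℝ) (j k : Fin 3) (b c : ℝ) : Fin 3 → ℝ :=
  Function.update (Function.update x j b) k c

lemma ins_i {x : Fin 3 → ℝ} {i j k : Fin 3} (hij : i ≠ j) (hik : i ≠ k) (b c : ℝ) :
    ins x j k b c i = x i := by
  rw [ins, Function.update_of_ne hik, Function.update_of_ne hij]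

lemma ins_j {x : Fin 3 → ℝ} {j k : Fin 3} (hjk : j ≠ k) (b c : ℝ) :
    ins x j k b c j = b := by
  rw [ins, Function.update_of_ne hjk, Function.update_self]

lemma ins_k {x : Fin 3 → ℝ} {j k : Fin 3} (b c : ℝ) : ins x j k b c k = c := by
  rw [ins, Function.update_self]

lemma ins_upd_k {x : Fin 3 → ℝ} {j k : Fin 3} (b c c' : ℝ) :
    Function.update (ins x j k b c) k c' = ins x j k b c' := by
  rw [ins, ins, Function.update_idem]

lemma ins_upd_j {x : Fin 3 → ℝ} {j k : Fin 3} (hjk : j ≠ k) (b c b' : ℝ) :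
    Function.update (ins x j k b c) j b' = ins x j k b' c := by
  rw [ins, ins, Function.update_comm hjk.symm, Function.update_idem]

lemma ins_self {x : Fin 3 → ℝ} {j k : Fin 3} : ins x j k (x j) (x k) = x := by
  rw [ins, Function.update_eq_self, Function.update_eq_self]

lemma lc_serve (F : (Fin 3 → ℝ) → ℝ × ℝ) (ρ : ℝ) (x : Fin 3 → ℝ) (i j k : Fin 3)
    (hρ : 1 ≤ ρ) (hord : Ordered F) (happ : ApproxRatio F ρ)
    (hij : i ≠ j) (hik : i ≠ k) (hjk : j ≠ k) {b c : ℝ}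
    (hab : x i < b) (hbc : b < c) (hsep : ρ * (c - b) < b - x i) :
    fcost b (F (ins x j k b c)) = |(F (ins x j k b c)).2 - b| ∧
    fcost c (F (ins x j k b c)) = |(F (ins x j k b c)).2 - c| := by
  have hρ0 : (0:ℝ) < ρ := lt_of_lt_of_le one_pos hρ
  have hcb : (0:ℝ) < c - b := sub_pos.2 hbc
  have hba : (0:ℝ) < b - x i := lt_trans (mul_pos hρ0 hcb) hsep
  have hopt : optCost (ins x j k b c) ≤ c - b := by
    have h3 : scost (ins x j k b c) (x i, b) = c - b := by
      rw [lc_scost_three _ _ hij hik hjk, ins_i hij hik, ins_j hjk, ins_k]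
      have e1 : fcost (x i) (x i, b) = 0 := by
        show min |x i - x i| |x i - b| = 0
        rw [sub_self, abs_zero]; exact min_eq_left (abs_nonneg _)
      have e2 : fcost b (x i, b) = 0 := by
        show min |b - x i| |b - b| = 0
        rw [sub_self, abs_zero]; exact min_eq_right (abs_nonneg _)
      have e3 : fcost c (x i, b) = c - b := by
        show min |c - x i| |c - b| = c - b
        rw [abs_of_pos (by linarith), abs_of_pos hcb]
        exact min_eq_right (by linarith)
      rw [e1, e2, e3]; ring
    calc optCost (ins x j k b c) ≤ scost (ins x j k b c) (x i, b) := lc_optCost_le _ _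
      _ = c - b := h3
  have hS : scost (ins x j k b c) (F (ins x j k b c)) ≤ ρ * (c - b) :=
    le_trans (happ _) (mul_le_mul_of_nonneg_left hopt hρ0.le)
  have hdec := lc_scost_three (ins x j k b c) (F (ins x j k b c)) hij hik hjk
  rw [ins_i hij hik, ins_j hjk, ins_k] at hdec
  set u := (F (ins x j k b c)).1 with hu
  set v := (F (ins x j k b c)).2 with hv
  have huv : u ≤ v := hord _
  have fi : fcost (x i) (F (ins x j k b c)) = min |x i - u| |x i - v| := rfl
  have fj : fcost b (F (ins x j k b c)) = min |b - u| |b - v| := rfl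
  have fk : fcost c (F (ins x j k b c)) = min |c - u| |c - v| := rfl
  have hj : |b - v| ≤ |b - u| := by
    by_contra hcon
    push_neg at hcon
    rcases le_or_gt |x i - u| |x i - v| with hc1 | hc1
    · have e1 : fcost (x i) (F (ins x j k b c)) = |x i - u| := by rw [fi]; exact min_eq_left hc1
      have e2 : fcost b (F (ins x j k b c)) = |b - u| := by rw [fj]; exact min_eq_left hcon.le
      have t1 : b - x i ≤ |b - u| + |x i - u| := by
        have h4 : |b - x i| ≤ |b - u| + |u - x i| := abs_sub_le b u (x i)
        rw [abs_sub_comm u (x i)] at h4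
        exact le_trans (le_abs_self _) h4
      have t2 : 0 ≤ fcost c (F (ins x j k b c)) := lc_fcost_nonneg _ _
      rw [e1, e2] at hdec
      linarith
    · have h1' : (b - u) * (b - u) < (b - v) * (b - v) := by
        have h5 := mul_self_lt_mul_self (abs_nonneg (b - u)) hcon
        rwa [abs_mul_abs_self, abs_mul_abs_self] at h5
      have h2' : (x i - v) * (x i - v) < (x i - u) * (x i - u) := by
        have h5 := mul_self_lt_mul_self (abs_nonneg (x i - v)) hc1
        rwa [abs_mul_abs_self, abs_mul_abs_self] at h5
      nlinarith [mul_nonneg (sub_nonneg.2 huv) hba.le]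
  have hk : |c - v| ≤ |c - u| := by
    by_contra hcon
    push_neg at hcon
    rcases le_or_gt |x i - u| |x i - v| with hc1 | hc1
    · have e1 : fcost (x i) (F (ins x j k b c)) = |x i - u| := by rw [fi]; exact min_eq_left hc1
      have e2 : fcost c (F (ins x j k b c)) = |c - u| := by rw [fk]; exact min_eq_left hcon.le
      have t1 : c - x i ≤ |c - u| + |x i - u| := by
        have h4 : |c - x i| ≤ |c - u| + |u - x i| := abs_sub_le c u (x i)
        rw [abs_sub_comm u (x i)] at h4
        exact le_trans (le_abs_self _) h4
      have t2 : 0 ≤ fcost b (F (ins x j k b c)) := lc_fcost_nonneg _ _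
      rw [e1, e2] at hdec
      linarith
    · have h1' : (c - u) * (c - u) < (c - v) * (c - v) := by
        have h5 := mul_self_lt_mul_self (abs_nonneg (c - u)) hcon
        rwa [abs_mul_abs_self, abs_mul_abs_self] at h5
      have h2' : (x i - v) * (x i - v) < (x i - u) * (x i - u) := by
        have h5 := mul_self_lt_mul_self (abs_nonneg (x i - v)) hc1
        rwa [abs_mul_abs_self, abs_mul_abs_self] at h5
      have hca : (0:ℝ) ≤ c - x i := by linarith
      nlinarith [mul_nonneg (sub_nonneg.2 huv) hca]
  constructor
  · rw [fj, min_eq_right hj, abs_sub_comm]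
  · rw [fk, min_eq_right hk, abs_sub_comm]
lemma lc_degenerate (F : (Fin 3 → ℝ) → ℝ × ℝ) (ρ : ℝ) (x : Fin 3 → ℝ) (i j k : Fin 3)
    (happ : ApproxRatio F ρ)
    (hij : i ≠ j) (hik : i ≠ k) (hjk : j ≠ k) {c : ℝ} (hac : x i < c) (t : ℝ) :
    fcost t (F (ins x j k (x i) c)) ≤ |t - c| := by
  have hsc : scost (ins x j k (x i) c) (x i, c) = 0 := by
    rw [lc_scost_three _ _ hij hik hjk, ins_i hij hik, ins_j hjk, ins_k]
    have e1 : fcost (x i) (x i, c) = 0 := by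
      show min |x i - x i| |x i - c| = 0
      rw [sub_self, abs_zero]; exact min_eq_left (abs_nonneg _)
    have e3 : fcost c (x i, c) = 0 := by
      show min |c - x i| |c - c| = 0
      rw [sub_self, abs_zero]; exact min_eq_right (abs_nonneg _)
    rw [e1, e3]; ring
  have hopt : optCost (ins x j k (x i) c) = 0 :=
    le_antisymm (hsc ▸ lc_optCost_le _ _) (lc_optCost_nonneg _)
  have h0 : scost (ins x j k (x i) c) (F (ins x j k (x i) c)) ≤ 0 := by
    have h := happ (ins x j k (x i) c); rwa [hopt, mul_zero] at h
  have hdec := lc_scost_three (ins x j k (x i) c) (F (ins x j k (x i) c)) hij hik hjk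
  rw [ins_i hij hik, ins_j hjk, ins_k] at hdec
  have n1 := lc_fcost_nonneg (x i) (F (ins x j k (x i) c))
  have n2 := lc_fcost_nonneg c (F (ins x j k (x i) c))
  have hk0 : fcost c (F (ins x j k (x i) c)) = 0 := le_antisymm (by linarith) n2
  have hm : min |c - (F (ins x j k (x i) c)).1| |c - (F (ins x j k (x i) c)).2| = 0 := hk0
  rcases le_total |c - (F (ins x j k (x i) c)).1| |c - (F (ins x j k (x i) c)).2| with hcc | hcc
  · rw [min_eq_left hcc] at hm
    have h2 : (F (ins x j k (x i) c)).1 = c := (sub_eq_zero.mp (abs_eq_zero.mp hm)).symm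
    have h3 : fcost t (F (ins x j k (x i) c)) ≤ |t - (F (ins x j k (x i) c)).1| :=
      min_le_left _ _
    rwa [h2] at h3
  · rw [min_eq_right hcc] at hm
    have h2 : (F (ins x j k (x i) c)).2 = c := (sub_eq_zero.mp (abs_eq_zero.mp hm)).symm
    have h3 : fcost t (F (ins x j k (x i) c)) ≤ |t - (F (ins x j k (x i) c)).2| :=
      min_le_right _ _
    rwa [h2] at h3

lemma lc_jbound (F : (Fin 3 → ℝ) → ℝ × ℝ) (ρ : ℝ) (x : Fin 3 → ℝ) (i j k : Fin 3)
    (hρ : 1 ≤ ρ) (hord : Ordered F) (hsp : Strategyproof F) (happ : ApproxRatio F ρ)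
    (hij : i ≠ j) (hik : i ≠ k) (hjk : j ≠ k) {b c : ℝ}
    (hab : x i < b) (hbc : b < c) (hsep : ρ * (c - b) < b - x i) :
    |(F (ins x j k b c)).2 - b| ≤ c - b := by
  have hserve := (lc_serve F ρ x i j k hρ hord happ hij hik hjk hab hbc hsep).1
  have hdeg := lc_degenerate F ρ x i j k happ hij hik hjk (lt_trans hab hbc) b
  have hsp' := hsp (ins x j k b c) j (x i)
  rw [ins_j hjk] at hsp'
  rw [ins_upd_j hjk] at hsp'
  rw [hserve] at hsp'
  have h := le_trans hsp' hdeg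
  rwa [abs_sub_comm b c, abs_of_pos (sub_pos.2 hbc)] at h

lemma lc_vlec (F : (Fin 3 → ℝ) → ℝ × ℝ) (ρ : ℝ) (x : Fin 3 → ℝ) (i j k : Fin 3)
    (hρ : 1 ≤ ρ) (hord : Ordered F) (hsp : Strategyproof F) (happ : ApproxRatio F ρ)
    (hij : i ≠ j) (hik : i ≠ k) (hjk : j ≠ k) {b c : ℝ}
    (hab : x i < b) (hbc : b < c) (hsep : ρ * (c - b) < b - x i) :
    (F (ins x j k b c)).2 ≤ c := by
  have h := lc_jbound F ρ x i j k hρ hord hsp happ hij hik hjk hab hbc hsep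
  have h2 := le_abs_self ((F (ins x j k b c)).2 - b)
  linarith

lemma lc_kbound (F : (Fin 3 → ℝ) → ℝ × ℝ) (ρ : ℝ) (x : Fin 3 → ℝ) (i j k : Fin 3)
    (hρ : 1 ≤ ρ) (hord : Ordered F) (hsp : Strategyproof F) (happ : ApproxRatio F ρ)
    (hij : i ≠ j) (hik : i ≠ k) (hjk : j ≠ k) {b c : ℝ}
    (hab : x i < b) (hbc : b < c) (hsep : ρ * (c - b) < b - x i) :
    b ≤ (F (ins x j k b c)).2 := by
  by_contra hcon
  push_neg at hcon
  have hρ0 : (0:ℝ) < ρ := lt_of_lt_of_le one_pos hρ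
  have hcb : (0:ℝ) < c - b := sub_pos.2 hbc
  have hba : (0:ℝ) < b - x i := lt_trans (mul_pos hρ0 hcb) hsep
  set ε := min ((b - (F (ins x j k b c)).2)/2) ((b - x i)/(2*ρ)) with hεdef
  have hε0 : 0 < ε := lt_min (by linarith) (div_pos hba (by linarith))
  have hε1 : ρ * ε < b - x i := by
    have h1 : ε ≤ (b - x i)/(2*ρ) := min_le_right _ _
    have h2 : ρ * ε ≤ ρ * ((b - x i)/(2*ρ)) := mul_le_mul_of_nonneg_left h1 hρ0.le
    have h3 : ρ * ((b - x i)/(2*ρ)) = (b - x i)/2 := by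
      field_simp
    linarith
  have hbε : b < b + ε := by linarith
  have hW2sep : ρ * ((b + ε) - b) < b - x i := by
    have he : (b + ε) - b = ε := by ring
    rw [he]; exact hε1
  have hq := lc_jbound F ρ x i j k hρ hord hsp happ hij hik hjk hab hbε hW2sep
  have hserve := (lc_serve F ρ x i j k hρ hord happ hij hik hjk hab hbc hsep).2
  have hsp' := hsp (ins x j k b c) k (b + ε)
  rw [ins_k, ins_upd_k] at hsp'
  rw [hserve] at hsp'
  have h2 : fcost c (F (ins x j k b (b + ε))) ≤ |c - (F (ins x j k b (b + ε))).2| :=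
    min_le_right _ _
  have h3 : |c - (F (ins x j k b (b + ε))).2| ≤ |c - b| + |b - (F (ins x j k b (b + ε))).2| :=
    abs_sub_le c b _
  have h4 : |b - (F (ins x j k b (b + ε))).2| ≤ ε := by
    rw [abs_sub_comm]
    have he : (b + ε) - b = ε := by ring
    rw [he] at hq
    exact hq
  have h5 : |(F (ins x j k b c)).2 - c| = c - (F (ins x j k b c)).2 := by
    rw [abs_of_nonpos (by linarith), neg_sub]
  have h6 : |c - b| = c - b := abs_of_pos hcb
  have h7 : ε ≤ (b - (F (ins x j k b c)).2)/2 := min_le_left _ _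
  linarith

lemma lc_anchor (F : (Fin 3 → ℝ) → ℝ × ℝ) (ρ : ℝ) (x : Fin 3 → ℝ) (i j k : Fin 3)
    (hρ : 1 ≤ ρ) (hord : Ordered F) (hsp : Strategyproof F) (happ : ApproxRatio F ρ)
    (hij : i ≠ j) (hik : i ≠ k) (hjk : j ≠ k) {b c : ℝ}
    (hab : x i < b) (hbc : b < c) (hsep : ρ * (c - b) < b - x i)
    (hbv : b < (F (ins x j k b c)).2) :
    (F (ins x j k b ((F (ins x j k b c)).2))).2 = (F (ins x j k b c)).2 := by
  have hρ0 : (0:ℝ) < ρ := lt_of_lt_of_le one_pos hρ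
  have hvc : (F (ins x j k b c)).2 ≤ c :=
    lc_vlec F ρ x i j k hρ hord hsp happ hij hik hjk hab hbc hsep
  have hsepv : ρ * ((F (ins x j k b c)).2 - b) < b - x i :=
    lt_of_le_of_lt (mul_le_mul_of_nonneg_left (by linarith) hρ0.le) hsep
  have hsp' := hsp (ins x j k b ((F (ins x j k b c)).2)) k c
  rw [ins_k, ins_upd_k] at hsp'
  have h2 : fcost ((F (ins x j k b c)).2) (F (ins x j k b c)) ≤
      |(F (ins x j k b c)).2 - (F (ins x j k b c)).2| := min_le_right _ _
  rw [sub_self, abs_zero] at h2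
  have h0 : fcost ((F (ins x j k b c)).2) (F (ins x j k b ((F (ins x j k b c)).2))) = 0 :=
    le_antisymm (le_trans hsp' h2) (lc_fcost_nonneg _ _)
  have hserve := (lc_serve F ρ x i j k hρ hord happ hij hik hjk hab hbv hsepv).2
  rw [hserve] at h0
  exact sub_eq_zero.mp (abs_eq_zero.mp h0)
lemma lc_kpush (F : (Fin 3 → ℝ) → ℝ × ℝ) (ρ : ℝ) (x : Fin 3 → ℝ) (i j k : Fin 3)
    (hρ : 1 ≤ ρ) (hord : Ordered F) (hsp : Strategyproof F) (happ : ApproxRatio F ρ)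
    (hij : i ≠ j) (hik : i ≠ k) (hjk : j ≠ k) {b c y : ℝ}
    (hab : x i < b) (hbc : b < c) (hsep : ρ * (c - b) < b - x i)
    (hpin : (F (ins x j k b c)).2 = c) (hby : b < y) (hyc : y ≤ c) :
    (F (ins x j k b y)).2 = y := by
  have hρ0 : (0:ℝ) < ρ := lt_of_lt_of_le one_pos hρ
  rcases eq_or_lt_of_le hyc with rfl | hyc'
  · exact hpin
  · set A := {t : ℝ | (y ≤ t ∧ t ≤ c) ∧ (F (ins x j k b t)).2 = t} with hA
    have hcA : c ∈ A := ⟨⟨hyc, le_refl c⟩, hpin⟩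
    have hAne : A.Nonempty := ⟨c, hcA⟩
    have hAbdd : BddBelow A := ⟨y, fun t ht => ht.1.1⟩
    have hyw : y ≤ sInf A := le_csInf hAne fun t ht => ht.1.1
    have hwc : sInf A ≤ c := csInf_le hAbdd hcA
    have hWsep : ∀ t : ℝ, t ≤ c → ρ * (t - b) < b - x i := fun t htc =>
      lt_of_le_of_lt (mul_le_mul_of_nonneg_left (by linarith) hρ0.le) hsep
    have hsp_t : ∀ t : ℝ, b < t → t ≤ c → ∀ α ∈ A,
        |(F (ins x j k b t)).2 - t| ≤ |t - α| := by
      intro t hbt htc α hα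
      have hserve := (lc_serve F ρ x i j k hρ hord happ hij hik hjk hab hbt (hWsep t htc)).2
      have hsp' := hsp (ins x j k b t) k α
      rw [ins_k, ins_upd_k] at hsp'
      rw [hserve] at hsp'
      have h2 : fcost t (F (ins x j k b α)) ≤ |t - (F (ins x j k b α)).2| := min_le_right _ _
      rw [hα.2] at h2
      exact le_trans hsp' h2
    have hwy : sInf A = y := by
      by_contra hne
      have hyw' : y < sInf A := lt_of_le_of_ne hyw (Ne.symm hne)
      set t := (y + sInf A)/2 with htdef
      have hty : y ≤ t := by rw [htdef]; linarith
      have htw : t < sInf A := by rw [htdef]; linarith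
      have htc : t ≤ c := le_trans htw.le hwc
      have hbt : b < t := lt_of_lt_of_le hby hty
      have hgt : (F (ins x j k b t)).2 ≤ t :=
        lc_vlec F ρ x i j k hρ hord hsp happ hij hik hjk hab hbt (hWsep t htc)
      have hga : ∀ α ∈ A, 2*t - α ≤ (F (ins x j k b t)).2 := by
        intro α hα
        have h1 := hsp_t t hbt htc α hα
        have hαw : sInf A ≤ α := csInf_le hAbdd hα
        have e1 : |(F (ins x j k b t)).2 - t| = t - (F (ins x j k b t)).2 := by
          rw [abs_of_nonpos (by linarith), neg_sub]
        have e2 : |t - α| = α - t := by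
          rw [abs_of_nonpos (by linarith), neg_sub]
        rw [e1, e2] at h1
        linarith
      have hgy : y ≤ (F (ins x j k b t)).2 := by
        have h1 : 2*t - (F (ins x j k b t)).2 ≤ sInf A :=
          le_csInf hAne fun α hα => by linarith [hga α hα]
        rw [htdef] at h1
        linarith
      have hgneq : (F (ins x j k b t)).2 ≠ t := by
        intro h
        have htA : t ∈ A := ⟨⟨hty, htc⟩, h⟩
        have := csInf_le hAbdd htA
        linarith
      have hglt : (F (ins x j k b t)).2 < t := lt_of_le_of_ne hgt hgneq
      have hbg : b < (F (ins x j k b t)).2 := lt_of_lt_of_le hby hgy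
      have hanch := lc_anchor F ρ x i j k hρ hord hsp happ hij hik hjk hab hbt (hWsep t htc) hbg
      have hgA : (F (ins x j k b t)).2 ∈ A := ⟨⟨hgy, le_trans hglt.le htc⟩, hanch⟩
      have := csInf_le hAbdd hgA
      linarith
    have hfin := hsp_t y hby hyc
    have h1 : y + |(F (ins x j k b y)).2 - y| ≤ sInf A := by
      refine le_csInf hAne fun α hα => ?_
      have h := hfin α hα
      have hαy : y ≤ α := hα.1.1
      rw [abs_of_nonpos (by linarith : y - α ≤ 0), neg_sub] at h
      linarith
    rw [hwy] at h1
    have h2 : |(F (ins x j k b y)).2 - y| ≤ 0 := by linarith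
    exact sub_eq_zero.mp (abs_eq_zero.mp (le_antisymm h2 (abs_nonneg _)))

lemma lc_jpush (F : (Fin 3 → ℝ) → ℝ × ℝ) (ρ : ℝ) (x : Fin 3 → ℝ) (i j k : Fin 3)
    (hρ : 1 ≤ ρ) (hord : Ordered F) (hsp : Strategyproof F) (happ : ApproxRatio F ρ)
    (hij : i ≠ j) (hik : i ≠ k) (hjk : j ≠ k) {b c b' : ℝ}
    (hab : x i < b) (hbc : b < c) (hsep : ρ * (c - b) < b - x i)
    (hpin : (F (ins x j k b c)).2 = c)
    (hab' : x i < b') (hb'c : b' < c) (hsep' : ρ * (c - b') < b' - x i) :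
    (F (ins x j k b' c)).2 = c := by
  by_contra hne
  have hρ0 : (0:ℝ) < ρ := lt_of_lt_of_le one_pos hρ
  set T := {t : ℝ | (x i < t ∧ t < c ∧ ρ * (c - t) < t - x i) ∧ (F (ins x j k t c)).2 = c}
    with hT
  have hbT : b ∈ T := ⟨⟨hab, hbc, hsep⟩, hpin⟩
  have hTne : T.Nonempty := ⟨b, hbT⟩
  have hTbdd : BddBelow T := ⟨x i, fun t ht => ht.1.1.le⟩
  have hθb : sInf T ≤ b := csInf_le hTbdd hbT
  have hθc : sInf T < c := lt_of_le_of_lt hθb hbc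
  have R : ∀ s : ℝ, x i < s → s < c → ρ * (c - s) < s - x i →
      (F (ins x j k s c)).2 ≠ c → (F (ins x j k s c)).2 + c ≤ 2 * sInf T := by
    intro s hs1 hs2 hs3 hsne
    have hgs_le : (F (ins x j k s c)).2 ≤ c :=
      lc_vlec F ρ x i j k hρ hord hsp happ hij hik hjk hs1 hs2 hs3
    have hgs_lt : (F (ins x j k s c)).2 < c := lt_of_le_of_ne hgs_le hsne
    have hstep : ∀ t ∈ T, (F (ins x j k s c)).2 + c ≤ 2 * t := by
      intro t htT
      obtain ⟨⟨ht1, ht2, ht3⟩, htpin⟩ := htT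
      have hserve := (lc_serve F ρ x i j k hρ hord happ hij hik hjk ht1 ht2 ht3).1
      have hsp' := hsp (ins x j k t c) j s
      rw [ins_j hjk, ins_upd_j hjk] at hsp'
      rw [hserve, htpin] at hsp'
      have e1 : |c - t| = c - t := abs_of_pos (by linarith)
      rw [e1] at hsp'
      have h2 : fcost t (F (ins x j k s c)) ≤ |t - (F (ins x j k s c)).2| := min_le_right _ _
      have h3 : c - t ≤ |t - (F (ins x j k s c)).2| := le_trans hsp' h2
      rcases le_or_gt t ((F (ins x j k s c)).2) with hts | hts
      · exfalso
        rw [abs_of_nonpos (by linarith), neg_sub] at h3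
        linarith
      · rw [abs_of_pos (by linarith)] at h3
        linarith
    have h4 : ((F (ins x j k s c)).2 + c)/2 ≤ sInf T :=
      le_csInf hTne fun t ht => by linarith [hstep t ht]
    linarith
  have hgb' : b' ≤ (F (ins x j k b' c)).2 :=
    lc_kbound F ρ x i j k hρ hord hsp happ hij hik hjk hab' hb'c hsep'
  have hb'θ : b' + c ≤ 2 * sInf T := by
    have := R b' hab' hb'c hsep' hne
    linarith
  have hβ : (ρ * c + x i)/(ρ + 1) < sInf T := by
    have h1 : (ρ * c + x i)/(ρ + 1) < b' := by
      rw [div_lt_iff₀ (by linarith : (0:ℝ) < ρ + 1)]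
      nlinarith
    linarith
  have hmθ : max ((ρ * c + x i)/(ρ + 1)) (2 * sInf T - c) < sInf T :=
    max_lt hβ (by linarith)
  set t₁ := (max ((ρ * c + x i)/(ρ + 1)) (2 * sInf T - c) + sInf T)/2 with ht₁def
  have ht₁m : max ((ρ * c + x i)/(ρ + 1)) (2 * sInf T - c) < t₁ := by
    rw [ht₁def]; linarith
  have ht₁θ : t₁ < sInf T := by
    rw [ht₁def]; linarith
  have hβt₁ : (ρ * c + x i)/(ρ + 1) < t₁ := lt_of_le_of_lt (le_max_left _ _) ht₁m
  have haβ : x i < (ρ * c + x i)/(ρ + 1) := by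
    rw [lt_div_iff₀ (by linarith : (0:ℝ) < ρ + 1)]
    nlinarith [lt_trans hab hbc]
  have ht₁1 : x i < t₁ := lt_trans haβ hβt₁
  have ht₁2 : t₁ < c := lt_trans ht₁θ hθc
  have ht₁3 : ρ * (c - t₁) < t₁ - x i := by
    rw [div_lt_iff₀ (by linarith : (0:ℝ) < ρ + 1)] at hβt₁
    nlinarith
  have ht₁T : t₁ ∉ T := fun h => absurd (csInf_le hTbdd h) (not_le.2 ht₁θ)
  have hne₁ : (F (ins x j k t₁ c)).2 ≠ c := fun h => ht₁T ⟨⟨ht₁1, ht₁2, ht₁3⟩, h⟩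
  have h1 := R t₁ ht₁1 ht₁2 ht₁3 hne₁
  have h2 := lc_kbound F ρ x i j k hρ hord hsp happ hij hik hjk ht₁1 ht₁2 ht₁3
  have h3 : 2 * sInf T - c ≤ max ((ρ * c + x i)/(ρ + 1)) (2 * sInf T - c) := le_max_right _ _
  linarith
lemma lc_chain (F : (Fin 3 → ℝ) → ℝ × ℝ) (ρ : ℝ) (x : Fin 3 → ℝ) (i j k : Fin 3)
    (hρ : 1 ≤ ρ) (hord : Ordered F) (hsp : Strategyproof F) (happ : ApproxRatio F ρ)
    (hij : i ≠ j) (hik : i ≠ k) (hjk : j ≠ k)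
    (h1 : x i < x j) (h2 : x j < x k) (h3 : ρ * (x k - x j) < x j - x i)
    (hpin : (F (ins x j k (x j) (x k))).2 = x k) :
    ∀ n : ℕ, ∀ t' : ℝ, x i + (ρ/(ρ+1))^n * (x k - x i) < t' → t' ≤ x k →
      ∃ b₂ : ℝ, (x i < b₂ ∧ b₂ < t' ∧ ρ * (t' - b₂) < b₂ - x i) ∧
        (F (ins x j k b₂ t')).2 = t' := by
  have hρ0 : (0:ℝ) < ρ := lt_of_lt_of_le one_pos hρ
  have hρ1 : (0:ℝ) < ρ + 1 := by linarith
  have hr0 : (0:ℝ) < ρ/(ρ+1) := div_pos hρ0 hρ1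
  have hr1 : ρ/(ρ+1) < 1 := (div_lt_one hρ1).2 (by linarith)
  have hM : (0:ℝ) < x k - x i := by linarith
  intro n
  induction n with
  | zero =>
    intro t' ha hb
    rw [pow_zero, one_mul] at ha
    exfalso; linarith
  | succ n ih =>
    intro t' ha hb
    rcases lt_or_ge (x i + (ρ/(ρ+1))^n * (x k - x i)) t' with hc | hc
    · exact ih t' hc hb
    · -- need an intermediate level τ
      have hrn : (0:ℝ) < (ρ/(ρ+1))^n := pow_pos hr0 n
      have hta : x i < t' := by nlinarith [pow_pos hr0 (n+1)]
      have hdiv : (ρ/(ρ+1))^n * (x k - x i) < (t' - x i)/(ρ/(ρ+1)) := by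
        rw [lt_div_iff₀ hr0]
        have : (ρ/(ρ+1))^(n+1) = (ρ/(ρ+1))^n * (ρ/(ρ+1)) := pow_succ _ _
        nlinarith
      set mid := ((ρ/(ρ+1))^n * (x k - x i) + (t' - x i)/(ρ/(ρ+1)))/2 with hmid
      have hmid1 : (ρ/(ρ+1))^n * (x k - x i) < mid := by rw [hmid]; linarith
      have hmid2 : mid < (t' - x i)/(ρ/(ρ+1)) := by rw [hmid]; linarith
      have hmid3 : t' - x i < mid := by
        have : t' - x i ≤ (ρ/(ρ+1))^n * (x k - x i) := by linarith
        linarith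
      set τ := min (x k) (x i + mid) with hτdef
      have hτt' : t' ≤ τ := le_min hb (by linarith)
      have hτxk : τ ≤ x k := min_le_left _ _
      have hτa : τ - x i < (t' - x i)/(ρ/(ρ+1)) := by
        have : τ ≤ x i + mid := min_le_right _ _
        linarith
      have hrτ : (ρ/(ρ+1)) * (τ - x i) < t' - x i := by
        rw [lt_div_iff₀ hr0] at hτa
        linarith [hτa]
      have haτ : x i < τ := by linarith
      -- a pinned instance at level τ
      have Qτ : ∃ b₂ : ℝ, (x i < b₂ ∧ b₂ < τ ∧ ρ * (τ - b₂) < b₂ - x i) ∧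
          (F (ins x j k b₂ τ)).2 = τ := by
        rcases le_total (x k) (x i + mid) with hm1 | hm1
        · have hτeq : τ = x k := min_eq_left hm1
          rw [hτeq]
          exact ⟨x j, ⟨h1, h2, h3⟩, hpin⟩
        · have hτeq : τ = x i + mid := min_eq_right hm1
          refine ih τ ?_ hτxk
          rw [hτeq]; linarith
      obtain ⟨b₂, ⟨hb₂1, hb₂2, hb₂3⟩, hb₂pin⟩ := Qτ
      -- the new witness b₃
      set b₃ := (x i + (ρ/(ρ+1)) * (τ - x i) + t')/2 with hb₃def
      have hrτ0 : (0:ℝ) < (ρ/(ρ+1)) * (τ - x i) := mul_pos hr0 (by linarith)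
      have hb₃1 : x i < b₃ := by rw [hb₃def]; linarith
      have hb₃2 : b₃ < t' := by rw [hb₃def]; linarith
      have hb₃low : x i + (ρ/(ρ+1)) * (τ - x i) < b₃ := by rw [hb₃def]; linarith
      have hb₃4 : b₃ < τ := lt_of_lt_of_le hb₃2 hτt'
      have hb₃3 : ρ * (τ - b₃) < b₃ - x i := by
        have h5 : (ρ/(ρ+1)) * (τ - x i) < b₃ - x i := by linarith
        rw [div_mul_eq_mul_div, div_lt_iff₀ hρ1] at h5
        nlinarith
      have hpin₃ : (F (ins x j k b₃ τ)).2 = τ :=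
        lc_jpush F ρ x i j k hρ hord hsp happ hij hik hjk hb₂1 hb₂2 hb₂3 hb₂pin hb₃1 hb₃4 hb₃3
      have hpin₄ : (F (ins x j k b₃ t')).2 = t' :=
        lc_kpush F ρ x i j k hρ hord hsp happ hij hik hjk hb₃1 hb₃4 hb₃3 hpin₃ hb₃2 hτt'
      have hsep₄ : ρ * (t' - b₃) < b₃ - x i :=
        lt_of_le_of_lt (mul_le_mul_of_nonneg_left (by linarith) hρ0.le) hb₃3
      exact ⟨b₃, ⟨hb₃1, hb₃2, hsep₄⟩, hpin₄⟩
/-- Proposition `left_cover` (K = 2): if `x` is `(i|j,k)`-well-separated with the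
rightmost facility at `x_k`, then for every `(i|j,k)`-well-separated instance
obtained by replacing `x_j, x_k` with `x'_j, x'_k` where `x'_k ≤ x_k`, the
rightmost facility is at `x'_k`. -/
theorem left_cover (F : (Fin 3 → ℝ) → ℝ × ℝ) (ρ : ℝ) (hρ : 1 ≤ ρ)
    (hord : Ordered F) (hsp : Strategyproof F) (happ : ApproxRatio F ρ)
    (x : Fin 3 → ℝ) (i j k : Fin 3)
    (hij : i ≠ j) (hik : i ≠ k) (hjk : j ≠ k)
    (hws : WellSep ρ x i j k) (hF : (F x).2 = x k)
    (x'j x'k : ℝ)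
    (hws' : WellSep ρ (Function.update (Function.update x j x'j) k x'k) i j k)
    (hle : x'k ≤ x k) :
    (F (Function.update (Function.update x j x'j) k x'k)).2 = x'k := by

  obtain ⟨h1, h2, h3⟩ := hws
  replace hws' : WellSep ρ (ins x j k x'j x'k) i j k := hws'
  obtain ⟨w1, w2, w3⟩ := hws'
  simp only [ins_i hij hik, ins_j hjk, ins_k] at w1 w2 w3
  have hpin : (F (ins x j k (x j) (x k))).2 = x k := by rw [ins_self]; exact hF
  have hρ0 : (0:ℝ) < ρ := lt_of_lt_of_le one_pos hρ
  have hρ1 : (0:ℝ) < ρ + 1 := by linarith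
  have hr0 : (0:ℝ) < ρ/(ρ+1) := div_pos hρ0 hρ1
  have hr1 : ρ/(ρ+1) < 1 := (div_lt_one hρ1).2 (by linarith)
  have hM : (0:ℝ) < x k - x i := by linarith
  have hε : (0:ℝ) < (x'k - x i)/(x k - x i) := div_pos (by linarith) hM
  obtain ⟨n, hn⟩ := exists_pow_lt_of_lt_one hε hr1
  have hn' : x i + (ρ/(ρ+1))^n * (x k - x i) < x'k := by
    have h4 : (ρ/(ρ+1))^n * (x k - x i) < ((x'k - x i)/(x k - x i)) * (x k - x i) :=
      mul_lt_mul_of_pos_right hn hM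
    rw [div_mul_cancel₀ _ (ne_of_gt hM)] at h4
    linarith
  obtain ⟨b₂, ⟨hb₂1, hb₂2, hb₂3⟩, hb₂pin⟩ :=
    lc_chain F ρ x i j k hρ hord hsp happ hij hik hjk h1 h2 h3 hpin n x'k hn' hle
  show (F (ins x j k x'j x'k)).2 = x'k
  exact lc_jpush F ρ x i j k hρ hord hsp happ hij hik hjk hb₂1 hb₂2 hb₂3 hb₂pin w1 w2 w3
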